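/- Let X₀ ⊂ X₁ be r.i. spaces on [0,1] with the embedding strict and ‖·‖_{X₁} ≤ ‖·‖_{X₀}, let (m_k) satisfy m₁ ≥ 2 and the rapid-growth condition m_n^{-1}Σ_{i<n} m_i + m_n Σ_{i>n} m_i^{-1} < 2^{-n-1}. If (x_n) is a sequence of functions with k(m_k^{-1}, m_k, x_n; X₀, X₁) ≤ 1 for all k,n and m(supp x_n) → 0, then there is a subsequence (x_{n_k}) with ‖x_{n_k}‖_{X₁} ≤ 2/m_k for every k. -/

import Mathlib

open MeasureTheory Set Filter Topology

noncomputable section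

/-- A Banach function lattice on a subset `I ⊆ ℝ` (with Lebesgue measure), encoded by
a membership predicate `Mem` and a (total) norm function `N` satisfying the lattice/ideal
axioms on members. -/
structure BFL (I : Set ℝ) where
  Mem : (ℝ → ℝ) → Prop
  N : (ℝ → ℝ) → ℝ
  mem_meas : ∀ f, Mem f → AEMeasurable f (volume.restrict I)
  nonneg : ∀ f, 0 ≤ N f
  zero_mem : Mem 0
  zero_norm : N 0 = 0
  ideal : ∀ f g, AEMeasurable f (volume.restrict I) →
    (∀ᵐ t ∂volume.restrict I, |f t| ≤ |g t|) → Mem g → Mem f ∧ N f ≤ N g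
  add_mem : ∀ f g, Mem f → Mem g → Mem (f + g)
  add_le : ∀ f g, Mem f → Mem g → N (f + g) ≤ N f + N g
  smul_mem : ∀ (c : ℝ) f, Mem f → Mem (c • f)
  smul_norm : ∀ (c : ℝ) f, Mem f → N (c • f) = |c| * N f

/-- A rearrangement invariant (symmetric) space on `I`: a Banach function lattice whose
norm depends only on the distribution function, having the Fatou property (the paper's
standing assumption that r.i. spaces are separable or maximal). -/
structure RIS (I : Set ℝ) extends BFL I where
  symm : ∀ f g, AEMeasurable f (volume.restrict I) → Mem g →
    (∀ τ : ℝ, 0 < τ →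
      (volume.restrict I) {t | τ < |f t|} = (volume.restrict I) {t | τ < |g t|}) →
    Mem f ∧ N f = N g
  fatou : ∀ (f : ℕ → ℝ → ℝ) (g : ℝ → ℝ) (C : ℝ), (∀ n, Mem (f n)) →
    (∀ n, ∀ᵐ t ∂volume.restrict I, 0 ≤ f n t ∧ f n t ≤ f (n + 1) t) →
    (∀ᵐ t ∂volume.restrict I, Tendsto (fun n => f n t) atTop (𝓝 (g t))) →
    AEMeasurable g (volume.restrict I) → (∀ n, N (f n) ≤ C) →
    Mem g ∧ N g ≤ C

/-- The fundamental function `φ_X(t) = ‖χ_{[0,t]}‖_X` of an r.i. space on `[0,1]`. -/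
def fund (X : RIS (Set.Icc (0:ℝ) 1)) (t : ℝ) : ℝ :=
  X.N ((Set.Icc (0:ℝ) t).indicator fun _ => (1:ℝ))

/-- The Peetre K-functional `k(α, β, a; X₀, X₁)`. -/
def Kfun {I : Set ℝ} (X0 X1 : BFL I) (α β : ℝ) (a : ℝ → ℝ) : ℝ :=
  sInf {v | ∃ a0 a1, X0.Mem a0 ∧ X1.Mem a1 ∧ a = a0 + a1 ∧
    v = α * X0.N a0 + β * X1.N a1}

/-- `X₀` is strictly embedded into `X₁`: every norm-bounded sequence in `X₀` whose supports
have measure tending to `0` tends to `0` in the `X₁` norm. -/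
def StrictEmb (X0 X1 : RIS (Set.Icc (0:ℝ) 1)) : Prop :=
  ∀ (x : ℕ → ℝ → ℝ) (C : ℝ), (∀ n, X0.Mem (x n)) → (∀ n, X0.N (x n) ≤ C) →
    Tendsto (fun n => volume (Function.support (x n) ∩ Set.Icc 0 1)) atTop (𝓝 0) →
    Tendsto (fun n => X1.N (x n)) atTop (𝓝 0)

/-- Let `X₀ ⊂ X₁` be r.i. spaces on `[0,1]` with strict embedding and
`‖·‖_{X₁} ≤ ‖·‖_{X₀}`, and let `(m_k)` satisfy `m₀ ≥ 2` and the rapid growth condition.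
If `(x_n)` is a sequence in `X₀ + X₁` with `k(m_k⁻¹, m_k, x_n; X₀, X₁) ≤ 1` for all `k, n`
and `m(supp x_n) → 0`, then some subsequence satisfies `‖x_{n_k}‖_{X₁} ≤ 2/m_k`. -/
theorem stmt6 (X0 X1 : RIS (Set.Icc (0:ℝ) 1))
    (hemb : ∀ f, X0.Mem f → X1.Mem f ∧ X1.N f ≤ X0.N f)
    (hstrict : StrictEmb X0 X1)
    (m : ℕ → ℝ) (hmono : StrictMono m) (hm0 : 2 ≤ m 0)
    (hmsum : Summable fun i => (m i)⁻¹)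
    (hgrow : ∀ n, (m n)⁻¹ * ∑ i ∈ Finset.range n, m i
        + m n * ∑' i : ℕ, (m (n + 1 + i))⁻¹ < (2:ℝ) ^ (-(n:ℤ) - 2))
    (x : ℕ → ℝ → ℝ)
    (hxsum : ∀ n, ∃ a0 a1, X0.Mem a0 ∧ X1.Mem a1 ∧ x n = a0 + a1)
    (hK : ∀ k n, Kfun X0.toBFL X1.toBFL (m k)⁻¹ (m k) (x n) ≤ 1)
    (hsupp : Tendsto (fun n => volume (Function.support (x n) ∩ Set.Icc 0 1))
      atTop (𝓝 0)) :
    ∃ φ : ℕ → ℕ, StrictMono φ ∧ ∀ k, X1.N (x (φ k)) ≤ 2 / m k := by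
  have hmpos : ∀ k, (0:ℝ) < m k := fun k =>
    lt_of_lt_of_le (by norm_num) (le_trans hm0 (hmono.monotone (Nat.zero_le k)))
  set μ := volume.restrict (Set.Icc (0:ℝ) 1) with hμ
  -- auxiliary measurability fact
  have aux : ∀ f g : ℝ → ℝ, AEMeasurable f μ → AEMeasurable g μ →
      AEMeasurable ((Function.support g).indicator f) μ := by
    intro f g hf hg
    refine ⟨(Function.support (hg.mk g)).indicator (hf.mk f),
      hf.measurable_mk.indicator (measurableSet_support hg.measurable_mk), ?_⟩
    filter_upwards [hf.ae_eq_mk, hg.ae_eq_mk] with t h1 h2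
    unfold Set.indicator
    simp only [Function.mem_support, h1, h2]
  -- the key eventual estimate
  have main : ∀ k, ∀ᶠ n in atTop, X1.N (x n) ≤ 2 / m k := by
    intro k
    have key : ∀ n, ∃ y z, X0.Mem y ∧ X1.Mem z ∧ x n = y + z ∧
        X0.N y ≤ 3/2 * m k ∧ X1.N z ≤ 3/2 / m k ∧
        Function.support y ⊆ Function.support (x n) := by
      intro n
      have hne : {v | ∃ a0 a1, X0.Mem a0 ∧ X1.Mem a1 ∧ x n = a0 + a1 ∧
          v = (m k)⁻¹ * X0.N a0 + m k * X1.N a1}.Nonempty := by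
        obtain ⟨a0, a1, h0, h1, hsum⟩ := hxsum n
        exact ⟨_, a0, a1, h0, h1, hsum, rfl⟩
      obtain ⟨v, hvS, hvlt⟩ := Real.lt_sInf_add_pos hne (by norm_num : (0:ℝ) < 1/2)
      obtain ⟨a0, a1, h0, h1, hsum, hv⟩ := hvS
      have hKk := hK k n
      rw [Kfun] at hKk
      have hv32 : v < 3/2 := by linarith
      have ha0m : AEMeasurable a0 μ := X0.mem_meas a0 h0
      have ha1m : AEMeasurable a1 μ := X1.mem_meas a1 h1
      have hxm : AEMeasurable (x n) μ := by rw [hsum]; exact ha0m.add ha1m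
      have hN0 := X0.nonneg a0
      have hN1 := X1.nonneg a1
      have hinv : m k * (m k)⁻¹ = 1 := mul_inv_cancel₀ (hmpos k).ne'
      have hinv' : (0:ℝ) < (m k)⁻¹ := inv_pos.mpr (hmpos k)
      refine ⟨(Function.support (x n)).indicator a0,
        (Function.support (x n)).indicator a1, ?_, ?_, ?_, ?_, ?_,
        Set.support_indicator_subset⟩
      · exact (X0.ideal _ a0 (aux a0 (x n) ha0m hxm)
          (Filter.Eventually.of_forall fun t => by
            by_cases h : t ∈ Function.support (x n) <;>
              simp [Set.indicator_apply, h, abs_nonneg]) h0).1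
      · exact (X1.ideal _ a1 (aux a1 (x n) ha1m hxm)
          (Filter.Eventually.of_forall fun t => by
            by_cases h : t ∈ Function.support (x n) <;>
              simp [Set.indicator_apply, h, abs_nonneg]) h1).1
      · funext t
        by_cases h : t ∈ Function.support (x n)
        · simp only [Pi.add_apply, Set.indicator_of_mem h]
          rw [hsum]; rfl
        · have hx0 : x n t = 0 := Function.notMem_support.mp h
          simp [Set.indicator_apply, h, hx0]
      · have hle := (X0.ideal _ a0 (aux a0 (x n) ha0m hxm)
          (Filter.Eventually.of_forall fun t => by
            by_cases h : t ∈ Function.support (x n) <;>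
              simp [Set.indicator_apply, h, abs_nonneg]) h0).2
        have : (m k)⁻¹ * X0.N a0 < 3/2 := by nlinarith [mul_nonneg (hmpos k).le hN1]
        have hb : X0.N a0 ≤ 3/2 * m k := by nlinarith
        linarith
      · have hle := (X1.ideal _ a1 (aux a1 (x n) ha1m hxm)
          (Filter.Eventually.of_forall fun t => by
            by_cases h : t ∈ Function.support (x n) <;>
              simp [Set.indicator_apply, h, abs_nonneg]) h1).2
        have : m k * X1.N a1 < 3/2 := by nlinarith [mul_nonneg hinv'.le hN0]
        have hb : X1.N a1 ≤ 3/2 / m k := by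
          rw [le_div_iff₀ (hmpos k)]; nlinarith
        linarith
    choose y z hy0 hz1 hxyz hyN hzN hysupp using key
    have htend : Tendsto (fun n => volume (Function.support (y n) ∩ Set.Icc 0 1))
        atTop (𝓝 0) := by
      refine tendsto_of_tendsto_of_tendsto_of_le_of_le tendsto_const_nhds hsupp
        (fun n => zero_le) (fun n => measure_mono ?_)
      exact Set.inter_subset_inter_left _ (hysupp n)
    have hX1 : Tendsto (fun n => X1.N (y n)) atTop (𝓝 0) :=
      hstrict y (3/2 * m k) hy0 hyN htend
    have hpos : (0:ℝ) < 1 / (2 * m k) := by have := hmpos k; positivity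
    filter_upwards [hX1.eventually_lt_const hpos] with n hn
    rw [hxyz n]
    have hadd := X1.add_le (y n) (z n) (hemb _ (hy0 n)).1 (hz1 n)
    have heq : 1 / (2 * m k) + 3/2 / m k = 2 / m k := by
      field_simp; ring
    have := hzN n
    linarith
  obtain ⟨φ, hφ, hφ2⟩ := Filter.extraction_forall_of_eventually main
  exact ⟨φ, hφ, hφ2⟩
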